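/- arXiv:1703.10426 — 2 statements merged into one kernel-verified Lean document; each statement's English description precedes it below -/
import Mathlib

section
/- Let G be an internal groupoid in the category of Leibniz algebras. If g₁ ∈ ker d₀ and g₂ ∈ ker d₁, then [g₁, g₂] = 0 and [g₂, g₁] = 0 in G. -/
/-- A (right) Leibniz algebra structure on a `k`-vector space `L`: a bilinear
bracket satisfying the Leibniz identity `[x,[y,z]] = [[x,y],z] - [[x,z],y]`. -/
structure LeibnizBracket (k : Type*) (L : Type*) [Field k] [AddCommGroup L] [Module k L] where
  br : L →ₗ[k] L →ₗ[k] L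
  leibniz : ∀ x y z : L, br x (br y z) = br (br x y) z - br (br x z) y

/-- An internal category (= internal groupoid) in the category of Leibniz algebras:
Leibniz algebras `G` (morphisms) and `Ob` (objects), with structural maps
`d0, d1 : G → Ob`, `e : Ob → G` and a partial composition, all of which are
morphisms of Leibniz algebras (linear and bracket preserving), satisfying the
category axioms; being a morphism, the composition satisfies the interchange laws. -/
structure LeibnizInternalCat (k G Ob : Type*) [Field k] [AddCommGroup G] [Module k G]
    [AddCommGroup Ob] [Module k Ob] where
  BG : LeibnizBracket k G
  BOb : LeibnizBracket k Ob
  d0 : G →ₗ[k] Ob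
  d1 : G →ₗ[k] Ob
  e : Ob →ₗ[k] G
  d0e : ∀ x, d0 (e x) = x
  d1e : ∀ x, d1 (e x) = x
  d0br : ∀ g g', d0 (BG.br g g') = BOb.br (d0 g) (d0 g')
  d1br : ∀ g g', d1 (BG.br g g') = BOb.br (d1 g) (d1 g')
  ebr : ∀ x y, e (BOb.br x y) = BG.br (e x) (e y)
  /-- composition `h ∘ g`, defined when `d1 g = d0 h` -/
  comp : (h g : G) → d1 g = d0 h → G
  d0comp : ∀ h g hc, d0 (comp h g hc) = d0 g
  d1comp : ∀ h g hc, d1 (comp h g hc) = d1 h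
  comp_id : ∀ g (hc : d1 (e (d0 g)) = d0 g), comp g (e (d0 g)) hc = g
  id_comp : ∀ g (hc : d1 g = d0 (e (d1 g))), comp (e (d1 g)) g hc = g
  assoc : ∀ f h g hc1 hc2 hc3 hc4, comp f (comp h g hc1) hc2 = comp (comp f h hc3) g hc4
  add_comp : ∀ h g h' g' hc hc' hcc,
    comp (h + h') (g + g') hcc = comp h g hc + comp h' g' hc'
  smul_comp : ∀ (c : k) h g hc hcc, comp (c • h) (c • g) hcc = c • comp h g hc
  br_comp : ∀ h g h' g' hc hc' hcc,
    comp (BG.br h h') (BG.br g g') hcc = BG.br (comp h g hc) (comp h' g' hc')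

lemma LeibnizInternalCat.comp_congr {k G Ob : Type*} [Field k] [AddCommGroup G] [Module k G]
    [AddCommGroup Ob] [Module k Ob] (C : LeibnizInternalCat k G Ob)
    {h g h' g' : G} {hc : C.d1 g = C.d0 h} {hc' : C.d1 g' = C.d0 h'}
    (eh : h = h') (eg : g = g') : C.comp h g hc = C.comp h' g' hc' := by
  subst eh; subst eg; rfl

/-- If `g₁ ∈ ker d₀` and `g₂ ∈ ker d₁` in an internal groupoid in Leibniz algebras,
then `[g₁, g₂] = [g₂, g₁] = 0`. -/
theorem br_ker_d0_ker_d1_eq_zero (k G Ob : Type*) [Field k] [AddCommGroup G] [Module k G]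
    [AddCommGroup Ob] [Module k Ob] (C : LeibnizInternalCat k G Ob)
    (g1 g2 : G) (h1 : C.d0 g1 = 0) (h2 : C.d1 g2 = 0) :
    C.BG.br g1 g2 = 0 ∧ C.BG.br g2 g1 = 0 := by
  have he0 : C.e 0 = 0 := map_zero _
  have p1 : C.d1 (0 : G) = C.d0 g1 := by simp [h1]
  have p2 : C.d1 g2 = C.d0 (0 : G) := by simp [h2]
  have p0 : C.d1 (0 : G) = C.d0 (0 : G) := by simp
  -- comp 0 0 = 0
  have hcomp0 : C.comp 0 0 p0 = 0 := by
    have h00 : ((0 : k) • (0 : G)) = 0 := by simp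
    calc C.comp 0 0 p0 = C.comp ((0:k) • 0) ((0:k) • 0) (by simp) :=
          C.comp_congr h00.symm h00.symm
      _ = (0:k) • C.comp 0 0 p0 := C.smul_comp 0 0 0 p0 _
      _ = 0 := zero_smul _ _
  -- g1 = comp g1 0
  have e1 : C.comp g1 0 p1 = g1 := by
    have hc : C.d1 (C.e (C.d0 g1)) = C.d0 g1 := C.d1e _
    calc C.comp g1 0 p1 = C.comp g1 (C.e (C.d0 g1)) hc :=
          C.comp_congr rfl (by rw [h1, he0])
      _ = g1 := C.comp_id g1 hc
  -- g2 = comp 0 g2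
  have e2 : C.comp 0 g2 p2 = g2 := by
    have hc : C.d1 g2 = C.d0 (C.e (C.d1 g2)) := (C.d0e _).symm
    calc C.comp 0 g2 p2 = C.comp (C.e (C.d1 g2)) g2 hc :=
          C.comp_congr (by rw [h2, he0]) rfl
      _ = g2 := C.id_comp g2 hc
  have br10 : C.BG.br g1 (0 : G) = 0 := map_zero _
  have br01 : C.BG.br (0 : G) g2 = 0 := by simp
  have br20 : C.BG.br g2 (0 : G) = 0 := map_zero _
  have br02 : C.BG.br (0 : G) g1 = 0 := by simp
  constructor
  · calc C.BG.br g1 g2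
        = C.BG.br (C.comp g1 0 p1) (C.comp 0 g2 p2) := by rw [e1, e2]
      _ = C.comp (C.BG.br g1 0) (C.BG.br 0 g2) (by simp) :=
          (C.br_comp g1 0 0 g2 p1 p2 _).symm
      _ = C.comp 0 0 p0 := C.comp_congr br10 br01
      _ = 0 := hcomp0
  · calc C.BG.br g2 g1
        = C.BG.br (C.comp 0 g2 p2) (C.comp g1 0 p1) := by rw [e1, e2]
      _ = C.comp (C.BG.br 0 g1) (C.BG.br g2 0) (by simp) :=
          (C.br_comp 0 g2 g1 0 p2 p1 _).symm
      _ = C.comp 0 0 p0 := C.comp_congr br02 br20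
      _ = 0 := hcomp0
end

section
/- Let G be an internal groupoid in the category of Leibniz algebras. Then the restriction d₁ : ker d₀ → Ob(G), together with the action x·g = [ε(x),g], g·x = [g,ε(x)] of Ob(G) on ker d₀, is a crossed module of Leibniz algebras: ∂(x·g) = [x, ∂g], ∂(g·x) = [∂g, x], g·∂(g₁) = [g,g₁], and ∂(g₁)·g = [g₁,g] for all x ∈ Ob(G), g, g₁ ∈ ker d₀, where ∂ = d₁|_{ker d₀}. -/
section Aux
variable {k G Ob : Type*} [Field k] [AddCommGroup G] [Module k G]
    [AddCommGroup Ob] [Module k Ob] (C : LeibnizInternalCat k G Ob)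

theorem LeibnizInternalCat.comp_congr_s11 {h g h' g' : G} (hh : h = h') (hg : g = g')
    (hc : C.d1 g = C.d0 h) (hc' : C.d1 g' = C.d0 h') :
    C.comp h g hc = C.comp h' g' hc' := by subst hh; subst hg; rfl

theorem LeibnizInternalCat.comp_eq (h g : G) (hc : C.d1 g = C.d0 h) :
    C.comp h g hc = h + g - C.e (C.d1 g) := by
  have hc1 : C.d1 (C.e (C.d0 h)) = C.d0 h := C.d1e _
  have hc2 : C.d1 (g - C.e (C.d1 g)) = C.d0 (0 : G) := by simp [C.d1e]
  have hcc : C.d1 (C.e (C.d0 h) + (g - C.e (C.d1 g))) = C.d0 (h + 0) := by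
    simp [C.d1e, hc]
  have key := C.add_comp h (C.e (C.d0 h)) 0 (g - C.e (C.d1 g)) hc1 hc2 hcc
  have e1 : C.comp h (C.e (C.d0 h)) hc1 = h := C.comp_id h hc1
  have e2 : C.comp 0 (g - C.e (C.d1 g)) hc2 = g - C.e (C.d1 g) := by
    have hc3 : C.d1 (g - C.e (C.d1 g)) =
        C.d0 (C.e (C.d1 (g - C.e (C.d1 g)))) := by simp [C.d0e]
    exact (C.comp_congr_s11 (by simp [C.d1e]) rfl hc2 hc3).trans
      (C.id_comp (g - C.e (C.d1 g)) hc3)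
  have heq : C.comp h g hc = C.comp (h + 0) (C.e (C.d0 h) + (g - C.e (C.d1 g))) hcc :=
    C.comp_congr_s11 (by simp) (by rw [hc]; abel) _ _
  rw [heq, key, e1, e2]
  abel

end Aux

/-- `(ker d₀, Ob(G), d₁|_{ker d₀})` with the action `x·g = [ε x, g]`, `g·x = [g, ε x]`
is a crossed module of Leibniz algebras: (LXM1) and (LXM2) hold. -/
theorem ker_d0_d1_crossed_module (k G Ob : Type*) [Field k] [AddCommGroup G] [Module k G]
    [AddCommGroup Ob] [Module k Ob] (C : LeibnizInternalCat k G Ob) :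
    -- (LXM1)  ∂(x·g) = [x, ∂g] and ∂(g·x) = [∂g, x]
    (∀ (x : Ob) (g : G), C.d0 g = 0 →
      C.d1 (C.BG.br (C.e x) g) = C.BOb.br x (C.d1 g)) ∧
    (∀ (g : G) (x : Ob), C.d0 g = 0 →
      C.d1 (C.BG.br g (C.e x)) = C.BOb.br (C.d1 g) x) ∧
    -- (LXM2)  g·∂(g₁) = [g,g₁] and ∂(g₁)·g = [g₁,g]
    (∀ (g g1 : G), C.d0 g = 0 → C.d0 g1 = 0 →
      C.BG.br g (C.e (C.d1 g1)) = C.BG.br g g1) ∧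
    (∀ (g g1 : G), C.d0 g = 0 → C.d0 g1 = 0 →
      C.BG.br (C.e (C.d1 g1)) g = C.BG.br g1 g) := by
  
  obtain ⟨lxm1a, lxm1b⟩ : (∀ (x : Ob) (g : G), C.d0 g = 0 →
      C.d1 (C.BG.br (C.e x) g) = C.BOb.br x (C.d1 g)) ∧
      (∀ (g : G) (x : Ob), C.d0 g = 0 →
      C.d1 (C.BG.br g (C.e x)) = C.BOb.br (C.d1 g) x) := by
    constructor
    · intro x g _; rw [C.d1br, C.d1e]
    · intro g x _; rw [C.d1br, C.d1e]
  refine ⟨lxm1a, lxm1b, ?_, ?_⟩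
  · intro g g1 hg hg1
    have hcb : C.d1 (C.BG.br 0 g1) = C.d0 (C.BG.br g (C.e (C.d1 g1))) := by
      simp [C.d0br, C.d1br, hg]
    have hc1 : C.d1 (0 : G) = C.d0 g := by simp [hg]
    have hc2 : C.d1 g1 = C.d0 (C.e (C.d1 g1)) := by simp [C.d0e]
    have key := C.br_comp g 0 (C.e (C.d1 g1)) g1 hc1 hc2 hcb
    rw [C.comp_eq, C.comp_eq, C.comp_eq] at key
    simp only [map_zero, LinearMap.zero_apply] at key
    rw [show g + 0 - (0:G) = g by abel,
        show C.e (C.d1 g1) + g1 - C.e (C.d1 g1) = g1 by abel] at key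
    simpa using key
  · intro g g1 hg hg1
    have hcb : C.d1 (C.BG.br g1 0) = C.d0 (C.BG.br (C.e (C.d1 g1)) g) := by
      simp [C.d0br, C.d1br, hg]
    have hc1 : C.d1 g1 = C.d0 (C.e (C.d1 g1)) := by simp [C.d0e]
    have hc2 : C.d1 (0 : G) = C.d0 g := by simp [hg]
    have key := C.br_comp (C.e (C.d1 g1)) g1 g 0 hc1 hc2 hcb
    rw [C.comp_eq, C.comp_eq, C.comp_eq] at key
    simp only [map_zero, LinearMap.zero_apply] at key
    rw [show C.e (C.d1 g1) + g1 - C.e (C.d1 g1) = g1 by abel,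
        show g + 0 - (0:G) = g by abel] at key
    simpa using key
end
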